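/- Let α, β ∈ 𝔻 with α ≠ β, let t ∈ (0,1), ω ∈ ℂ with |ω| = 1, and set τ = conj(α-β)/(α-β), γ = t·α + (1-t)·β. Define F(x₁,x₂) = (t·conj(ω)·x₁ + (1-t)·x₂ + τ·conj(ω)·x₁·x₂) / (1 + τ·((1-t)·conj(ω)·x₁ + t·x₂)) and φ(λ) = (ω·λ·m_α(λ), λ·m_β(λ)) where m_α(λ)=(α-λ)/(1-conj(α)λ). Then for all λ ∈ 𝔻, F(φ(λ)) = λ·m_γ(λ). -/

import Mathlib

open Complex Metric

lemma one_sub_conj_mul_ne_zero {a z : ℂ} (ha : ‖a‖ < 1) (hz : ‖z‖ < 1) :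
    1 - (starRingEnd ℂ) a * z ≠ 0 := by
  intro h
  have h1 : (starRingEnd ℂ) a * z = 1 := by linear_combination -h
  have : ‖(starRingEnd ℂ) a * z‖ < 1 := by
    rw [norm_mul, Complex.norm_conj]
    nlinarith [norm_nonneg a, norm_nonneg z]
  rw [h1] at this; simp at this

lemma mobius_abs_lt_one {a z : ℂ} (ha : ‖a‖ < 1) (hz : ‖z‖ < 1) :
    ‖(a - z) / (1 - (starRingEnd ℂ) a * z)‖ < 1 := by
  have hd := one_sub_conj_mul_ne_zero ha hz
  rw [norm_div, div_lt_one (norm_pos_iff.mpr hd)]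
  have key : Complex.normSq (1 - (starRingEnd ℂ) a * z) - Complex.normSq (a - z)
      = (1 - Complex.normSq a) * (1 - Complex.normSq z) := by
    simp only [Complex.normSq_apply, Complex.sub_re, Complex.sub_im, Complex.mul_re,
      Complex.mul_im, Complex.one_re, Complex.one_im, Complex.conj_re, Complex.conj_im]
    ring
  have ha2 : Complex.normSq a < 1 := by
    rw [← Complex.sq_norm] at *; nlinarith [norm_nonneg a]
  have hz2 : Complex.normSq z < 1 := by
    rw [← Complex.sq_norm] at *; nlinarith [norm_nonneg z]
  have : Complex.normSq (a - z) < Complex.normSq (1 - (starRingEnd ℂ) a * z) := by nlinarith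
  rw [← Complex.sq_norm, ← Complex.sq_norm (1 - _)] at this
  exact lt_of_pow_lt_pow_left₀ 2 (norm_nonneg _) this

set_option maxHeartbeats 1000000 in
theorem left_inverse_formula (α β : ℂ) (hα : α ∈ ball (0 : ℂ) 1) (hβ : β ∈ ball (0 : ℂ) 1)
    (hαβ : α ≠ β) (t : ℝ) (ht0 : 0 < t) (ht1 : t < 1) (ω : ℂ) (hω : ‖ω‖ = 1)
    (τ γ : ℂ) (hτ : τ = (starRingEnd ℂ) (α - β) / (α - β))
    (hγ : γ = (t : ℂ) * α + (1 - t) * β)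
    (F : ℂ × ℂ → ℂ)
    (hF : ∀ x : ℂ × ℂ, F x = ((t : ℂ) * (starRingEnd ℂ) ω * x.1 + (1 - t) * x.2 +
      τ * (starRingEnd ℂ) ω * x.1 * x.2) /
      (1 + τ * ((1 - t) * (starRingEnd ℂ) ω * x.1 + (t : ℂ) * x.2)))
    (φ : ℂ → ℂ × ℂ)
    (hφ : ∀ z : ℂ, φ z = (ω * z * ((α - z) / (1 - (starRingEnd ℂ) α * z)),
      z * ((β - z) / (1 - (starRingEnd ℂ) β * z)))) :
    ∀ z ∈ ball (0 : ℂ) 1, F (φ z) = z * ((γ - z) / (1 - (starRingEnd ℂ) γ * z)) := by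
  intro z hz
  rw [mem_ball, dist_zero_right] at hz hα hβ
  have hωω : (starRingEnd ℂ) ω * ω = 1 := by
    rw [mul_comm, Complex.mul_conj, Complex.normSq_eq_norm_sq, hω]; norm_num
  have hαβ' : α - β ≠ 0 := sub_ne_zero.mpr hαβ
  have hγabs : ‖γ‖ < 1 := by
    rw [hγ]
    calc ‖(t:ℂ) * α + (1 - t) * β‖
        ≤ ‖(t:ℂ) * α‖ + ‖(1 - (t:ℂ)) * β‖ := norm_add_le _ _
      _ < 1 := by
          rw [norm_mul, norm_mul]
          have h1 : ‖(t:ℂ)‖ = t := by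
            rw [Complex.norm_real, Real.norm_eq_abs, abs_of_pos ht0]
          have h2 : ‖1 - (t:ℂ)‖ = 1 - t := by
            rw [show (1 - (t:ℂ)) = ((1-t : ℝ) : ℂ) by push_cast; ring,
              Complex.norm_real, Real.norm_eq_abs, abs_of_pos (by linarith)]
          rw [h1, h2]
          nlinarith [norm_nonneg α, norm_nonneg β]
  have hda := one_sub_conj_mul_ne_zero hα hz
  have hdb := one_sub_conj_mul_ne_zero hβ hz
  have hdg := one_sub_conj_mul_ne_zero hγabs hz
  have hτabs : ‖τ‖ = 1 := by
    rw [hτ, norm_div, Complex.norm_conj, div_self (norm_ne_zero_iff.mpr hαβ')]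
  rw [hF, hφ]
  simp only
  set A := (α - z) / (1 - (starRingEnd ℂ) α * z) with hA
  set B := (β - z) / (1 - (starRingEnd ℂ) β * z) with hB
  have hAabs : ‖A‖ < 1 := mobius_abs_lt_one hα hz
  have hBabs : ‖B‖ < 1 := mobius_abs_lt_one hβ hz
  -- remove ω
  have ex1 : (t:ℂ) * (starRingEnd ℂ) ω * (ω * z * A) + (1 - (t:ℂ)) * (z * B) +
      τ * (starRingEnd ℂ) ω * (ω * z * A) * (z * B)
      = (t:ℂ) * (z * A) + (1 - (t:ℂ)) * (z * B) + τ * (z * A) * (z * B) := by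
    linear_combination ((t:ℂ) * (z * A) + τ * (z * A) * (z * B)) * hωω
  have ex2 : 1 + τ * ((1 - (t:ℂ)) * (starRingEnd ℂ) ω * (ω * z * A) + (t:ℂ) * (z * B))
      = 1 + τ * ((1 - (t:ℂ)) * (z * A) + (t:ℂ) * (z * B)) := by
    linear_combination τ * ((1 - (t:ℂ)) * (z * A)) * hωω
  rw [ex1, ex2]
  -- denominator nonzero
  have hbig : 1 + τ * ((1 - (t:ℂ)) * (z * A) + (t:ℂ) * (z * B)) ≠ 0 := by
    intro h
    have hval : τ * ((1 - (t:ℂ)) * (z * A) + (t:ℂ) * (z * B)) = -1 := by linear_combination h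
    have habs : ‖τ * ((1 - (t:ℂ)) * (z * A) + (t:ℂ) * (z * B))‖ < 1 := by
      rw [norm_mul, hτabs, one_mul]
      calc ‖(1 - (t:ℂ)) * (z * A) + (t:ℂ) * (z * B)‖
          ≤ ‖(1 - (t:ℂ)) * (z * A)‖ + ‖(t:ℂ) * (z * B)‖ :=
            norm_add_le _ _
        _ < 1 := by
            simp only [norm_mul, Complex.norm_real, Real.norm_eq_abs]
            have h2 : ‖1 - (t:ℂ)‖ = 1 - t := by
              rw [show (1 - (t:ℂ)) = ((1-t : ℝ) : ℂ) by push_cast; ring,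
                Complex.norm_real, Real.norm_eq_abs, abs_of_pos (by linarith)]
            rw [h2, abs_of_pos ht0]
            have hx : ‖z‖ * ‖A‖ < 1 := by
              nlinarith [norm_nonneg z, norm_nonneg A]
            have hy : ‖z‖ * ‖B‖ < 1 := by
              nlinarith [norm_nonneg z, norm_nonneg B]
            have hx0 : 0 ≤ ‖z‖ * ‖A‖ :=
              mul_nonneg (norm_nonneg z) (norm_nonneg A)
            have hy0 : 0 ≤ ‖z‖ * ‖B‖ :=
              mul_nonneg (norm_nonneg z) (norm_nonneg B)
            nlinarith
    rw [hval] at habs; simp at habs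
  conv_rhs => rw [mul_div_assoc']
  rw [div_eq_div_iff hbig hdg]
  rw [hτ, hγ] at *
  simp only [map_add, map_mul, map_sub, map_one, Complex.conj_ofReal] at hdg ⊢
  rw [hA, hB]
  have hda' : 1 - z * (starRingEnd ℂ) α ≠ 0 := by rwa [mul_comm]
  have hdb' : 1 - z * (starRingEnd ℂ) β ≠ 0 := by rwa [mul_comm]
  field_simp
  ring
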